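/- Let X and Y be independent random variables on a finite group G, with X δ-uniform and Y ε-uniform. Then the product XY is δε-uniform. -/

import Mathlib

open Finset

variable {G : Type*} [Fintype G] [Group G]

/-- A probability mass function on a finite group. -/
def IsPMF (μ : G → ℝ) : Prop := (∀ g, 0 ≤ μ g) ∧ ∑ g, μ g = 1

/-- Distribution of the product of independent random variables. -/
noncomputable def conv (μ ν : G → ℝ) (g : G) : ℝ := ∑ h, μ h * ν (h⁻¹ * g)

/-- X is ε-uniform: |Pr(X=g) − 1/|G|| ≤ ε/|G| for all g. -/
def IsEpsUniform (μ : G → ℝ) (ε : ℝ) : Prop :=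
  ∀ g : G, |μ g - 1 / (Fintype.card G : ℝ)| ≤ ε / (Fintype.card G : ℝ)

/-- If X is δ-uniform and Y is ε-uniform, X and Y independent, then XY is δε-uniform. -/
theorem stmt11 (μ ν : G → ℝ) (hμ : IsPMF μ) (hν : IsPMF ν) (δ ε : ℝ)
    (hδ0 : 0 ≤ δ) (hδ1 : δ ≤ 1) (hε0 : 0 ≤ ε) (hε1 : ε ≤ 1)
    (hX : IsEpsUniform μ δ) (hY : IsEpsUniform ν ε) :
    IsEpsUniform (conv μ ν) (δ * ε) := by
  intro g
  set n : ℝ := (Fintype.card G : ℝ) with hn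
  have hnpos : (0:ℝ) < n := by
    rw [hn]; exact_mod_cast Fintype.card_pos
  have hsumν : ∑ h : G, ν (h⁻¹ * g) = 1 := by
    rw [← hν.2]
    exact Fintype.sum_equiv ((Equiv.inv G).trans (Equiv.mulRight g)) _ _ (fun h => rfl)
  have key : conv μ ν g - 1 / n = ∑ h : G, (μ h - 1 / n) * (ν (h⁻¹ * g) - 1 / n) := by
    have expand : ∀ h : G, (μ h - 1 / n) * (ν (h⁻¹ * g) - 1 / n)
        = μ h * ν (h⁻¹ * g) - (1/n) * ν (h⁻¹ * g) - (1/n) * μ h + (1/n) * (1/n) := by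
      intro h; ring
    rw [Finset.sum_congr rfl (fun h _ => expand h)]
    simp only [Finset.sum_add_distrib, Finset.sum_sub_distrib, ← Finset.mul_sum, hsumν,
      hμ.2, Finset.sum_const, Finset.card_univ, nsmul_eq_mul]
    rw [conv, ← hn]
    field_simp
    ring
  rw [key]
  calc |∑ h : G, (μ h - 1 / n) * (ν (h⁻¹ * g) - 1 / n)|
      ≤ ∑ h : G, |(μ h - 1 / n) * (ν (h⁻¹ * g) - 1 / n)| := Finset.abs_sum_le_sum_abs _ _
    _ ≤ ∑ _h : G, (δ / n) * (ε / n) := by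
        apply Finset.sum_le_sum
        intro h _
        rw [abs_mul]
        exact mul_le_mul (hX h) (hY (h⁻¹ * g)) (abs_nonneg _)
          (div_nonneg hδ0 hnpos.le)
    _ = δ * ε / n := by
        rw [Finset.sum_const, Finset.card_univ, nsmul_eq_mul, ← hn]
        field_simp
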